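/- Let p and q be two points of the plane and let r_{pq} = ‖p−q‖/2 be the radius of the disk D_{pq}. Let D be a second closed disk with center o and radius r ≤ r_{pq} such that D ∩ D_{pq} ≠ ∅. Then ‖p−o‖ + ‖q−o‖ ≤ √5 · ‖p−q‖. -/
import Mathlib

noncomputable section

/-- Points of the plane with the Euclidean norm. -/
abbrev Pt : Type := EuclideanSpace ℝ (Fin 2)

/-- The closed disk with diameter the segment `pq`: center `(p+q)/2`, radius `‖p-q‖/2`. -/
def disk (p q : Pt) : Set Pt := Metric.closedBall (midpoint ℝ p q) (dist p q / 2)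

/-- If a disk of center o and radius r ≤ ‖p-q‖/2 meets the disk with diameter pq,
then ‖p-o‖ + ‖q-o‖ ≤ √5 ‖p-q‖. -/
theorem stmt4 (p q o : Pt) (r : ℝ) (hr : r ≤ dist p q / 2)
    (hint : (Metric.closedBall o r ∩ disk p q).Nonempty) :
    dist p o + dist q o ≤ Real.sqrt 5 * dist p q := by
  obtain ⟨x, hx1, hx2⟩ := hint
  rw [Metric.mem_closedBall] at hx1
  rw [disk, Metric.mem_closedBall] at hx2
  have hom : dist o (midpoint ℝ p q) ≤ dist p q := by
    calc dist o (midpoint ℝ p q) ≤ dist o x + dist x (midpoint ℝ p q) := dist_triangle _ _ _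
    _ ≤ dist p q / 2 + dist p q / 2 := by
        have := dist_comm o x; linarith
    _ = dist p q := by ring
  have hap := EuclideanGeometry.dist_sq_add_dist_sq_eq_two_mul_dist_midpoint_sq_add_half_dist_sq
    o p q
  have h5 : Real.sqrt 5 ^ 2 = 5 := Real.sq_sqrt (by norm_num)
  have h5n : (0:ℝ) ≤ Real.sqrt 5 := Real.sqrt_nonneg 5
  have hpo := dist_nonneg (x := p) (y := o)
  have hqo := dist_nonneg (x := q) (y := o)
  have hpq := dist_nonneg (x := p) (y := q)
  have hon := dist_nonneg (x := o) (y := midpoint ℝ p q)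
  rw [dist_comm o p, dist_comm o q] at hap
  nlinarith [sq_nonneg (dist p o - dist q o), mul_self_le_mul_self hon hom, sq_nonneg (dist p o + dist q o - Real.sqrt 5 * dist p q), mul_nonneg h5n hpq]
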